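/- For 0 < q < 1 and real x with q^{-1/2} ≤ x, for all integers k with 1 ≤ k ≤ K(x) := ⌊1/2 − ln(x)/ln(q)⌋, one has |(x;q)_k| ≥ q^{k(k-1)/2} x^k (q^{1/2};q)_k, and in particular |(x;q)_k| ≥ q^{k(k-1)/2} (q^{1/2};q)_∞ x^k. -/

import Mathlib

open Finset

/-- Finite real q-Pochhammer symbol `(x;q)_k = ∏_{j<k} (1 - x qʲ)`. -/
noncomputable def qPochR (x q : ℝ) (k : ℕ) : ℝ := ∏ j ∈ range k, (1 - x * q ^ j)

lemma aux_multipliable (q : ℝ) (hq0 : 0 < q) (hq1 : q < 1) :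
    Multipliable (fun j : ℕ => 1 - Real.sqrt q * q ^ j) := by
  have hs : Real.sqrt q < 1 := by
    rw [show (1:ℝ) = Real.sqrt 1 by simp]
    exact Real.sqrt_lt_sqrt hq0.le hq1
  have hs0 : 0 < Real.sqrt q := Real.sqrt_pos.mpr hq0
  have hfac : ∀ j : ℕ, 0 < 1 - Real.sqrt q * q ^ j := by
    intro j
    have h1 : Real.sqrt q * q ^ j < 1 := by
      calc Real.sqrt q * q ^ j ≤ Real.sqrt q * 1 := by
            exact mul_le_mul_of_nonneg_left (pow_le_one₀ hq0.le hq1.le) hs0.le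
        _ < 1 := by simpa using hs
    linarith
  have hsum : Summable (fun j : ℕ => Real.log (1 - Real.sqrt q * q ^ j)) := by
    rw [← summable_neg_iff]
    apply Summable.of_nonneg_of_le
      (g := fun j : ℕ => -Real.log (1 - Real.sqrt q * q ^ j))
      (f := fun j : ℕ => (1 - Real.sqrt q)⁻¹ * (Real.sqrt q * q ^ j))
    · intro j
      have : Real.log (1 - Real.sqrt q * q ^ j) ≤ 0 := by
        apply Real.log_nonpos (hfac j).le
        have : 0 ≤ Real.sqrt q * q ^ j := by positivity
        linarith
      linarith
    · intro j
      set t := Real.sqrt q * q ^ j with ht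
      have ht0 : 0 ≤ t := by positivity
      have htq : t ≤ Real.sqrt q := by
        calc t ≤ Real.sqrt q * 1 := mul_le_mul_of_nonneg_left (pow_le_one₀ hq0.le hq1.le) hs0.le
          _ = Real.sqrt q := by ring
      have h1t : 0 < 1 - t := hfac j
      have hlog : -Real.log (1 - t) = Real.log (1 - t)⁻¹ := by
        rw [Real.log_inv]
      rw [hlog]
      have hle : Real.log (1 - t)⁻¹ ≤ (1 - t)⁻¹ - 1 :=
        Real.log_le_sub_one_of_pos (by positivity)
      have : (1 - t)⁻¹ - 1 = t / (1 - t) := by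
        field_simp
        ring
      rw [this] at hle
      refine hle.trans ?_
      rw [div_le_iff₀ h1t]
      have h1 : (1 - Real.sqrt q) ≤ 1 - t := by linarith
      have h3 : 0 < 1 - Real.sqrt q := by linarith
      have h2 : (1 - Real.sqrt q)⁻¹ * t * (1 - Real.sqrt q) ≤ (1 - Real.sqrt q)⁻¹ * t * (1 - t) := by
        apply mul_le_mul_of_nonneg_left h1
        exact mul_nonneg (inv_nonneg.mpr h3.le) ht0
      calc t = (1 - Real.sqrt q)⁻¹ * t * (1 - Real.sqrt q) := by
              field_simp
        _ ≤ (1 - Real.sqrt q)⁻¹ * t * (1 - t) := h2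
    · apply Summable.mul_left
      apply Summable.mul_left
      exact summable_geometric_of_lt_one hq0.le hq1
  exact Real.multipliable_of_summable_log hfac hsum

/-- For `q^{-1/2} ≤ x` and `1 ≤ k ≤ K(x) = ⌊1/2 − ln x / ln q⌋`:
`|(x;q)_k| ≥ q^{k(k-1)/2} xᵏ (q^{1/2};q)_k ≥ q^{k(k-1)/2} (q^{1/2};q)_∞ xᵏ`. -/
theorem stmt19 (q x : ℝ) (hq0 : 0 < q) (hq1 : q < 1)
    (hx : q ^ (-(1 / 2) : ℝ) ≤ x)
    (k : ℕ) (hk1 : 1 ≤ k)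
    (hkK : (k : ℤ) ≤ ⌊(1 : ℝ) / 2 - Real.log x / Real.log q⌋) :
    q ^ (k * (k - 1) / 2 : ℕ) * x ^ k * qPochR (Real.sqrt q) q k ≤ |qPochR x q k|
    ∧ q ^ (k * (k - 1) / 2 : ℕ) * (∏' j : ℕ, (1 - Real.sqrt q * q ^ j)) * x ^ k
        ≤ |qPochR x q k| := by
  have hlogq : Real.log q < 0 := Real.log_neg hq0 hq1
  have hx0 : 0 < x := lt_of_lt_of_le (Real.rpow_pos_of_pos hq0 _) hx
  -- from the floor hypothesis: x ≥ q^(1/2 - k)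
  have hfloor : (k : ℝ) ≤ 1 / 2 - Real.log x / Real.log q := by
    have := Int.le_floor.mp hkK
    exact_mod_cast this
  have hlogx : ((1:ℝ) / 2 - (k : ℝ)) * Real.log q ≤ Real.log x := by
    have h1 : Real.log x / Real.log q ≤ 1 / 2 - (k : ℝ) := by linarith
    have := mul_le_mul_of_nonpos_right h1 hlogq.le
    rwa [div_mul_cancel₀ _ hlogq.ne] at this
  have hxk : q ^ ((1:ℝ) / 2 - (k : ℝ)) ≤ x := by
    rw [Real.rpow_def_of_pos hq0, ← Real.exp_log hx0]
    exact Real.exp_le_exp.mpr (by rw [mul_comm] at hlogx; exact hlogx)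
  have hsqrt : Real.sqrt q = q ^ ((1:ℝ)/2) := Real.sqrt_eq_rpow q
  -- key: x * (√q * q^(k-1)) ≥ 1
  have hkey : 1 ≤ x * (Real.sqrt q * q ^ (k - 1)) := by
    have hqpow : Real.sqrt q * q ^ (k - 1) = q ^ ((k:ℝ) - 1/2) := by
      rw [hsqrt, ← Real.rpow_natCast q (k-1), ← Real.rpow_add hq0]
      congr 1
      have : ((k - 1 : ℕ) : ℝ) = (k : ℝ) - 1 := by
        have : (1 : ℕ) ≤ k := hk1
        push_cast [Nat.cast_sub this]
        ring
      rw [this]; ring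
    rw [hqpow]
    calc (1:ℝ) = q ^ ((1:ℝ)/2 - (k:ℝ)) * q ^ ((k:ℝ) - 1/2) := by
          rw [← Real.rpow_add hq0]; norm_num
      _ ≤ x * q ^ ((k:ℝ) - 1/2) := by
          exact mul_le_mul_of_nonneg_right hxk (Real.rpow_pos_of_pos hq0 _).le
  have hs0 : 0 < Real.sqrt q := Real.sqrt_pos.mpr hq0
  have hs1 : Real.sqrt q < 1 := by
    rw [show (1:ℝ) = Real.sqrt 1 by simp]
    exact Real.sqrt_lt_sqrt hq0.le hq1
  -- pointwise bound
  have hpt : ∀ j ∈ range k,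
      x * q ^ j * (1 - Real.sqrt q * q ^ (k - 1 - j)) ≤ |1 - x * q ^ j| := by
    intro j hj
    rw [mem_range] at hj
    have hsplit : x * q ^ j * (Real.sqrt q * q ^ (k - 1 - j)) = x * (Real.sqrt q * q ^ (k - 1)) := by
      have h2 : (k - 1 : ℕ) = j + (k - 1 - j) := by omega
      conv_rhs => rw [h2, pow_add]
      ring
    have h1 : 1 ≤ x * q ^ j * (Real.sqrt q * q ^ (k - 1 - j)) := by rw [hsplit]; exact hkey
    have hsle : Real.sqrt q * q ^ (k - 1 - j) ≤ 1 := by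
      calc Real.sqrt q * q ^ (k - 1 - j) ≤ 1 * 1 :=
            mul_le_mul hs1.le (pow_le_one₀ hq0.le hq1.le) (by positivity) zero_le_one
        _ = 1 := by ring
    have hxq : 1 ≤ x * q ^ j := by
      by_contra h
      push_neg at h
      have := mul_le_of_le_one_right (show (0:ℝ) ≤ x * q ^ j by positivity) hsle
      linarith
    rw [abs_of_nonpos (by linarith)]
    nlinarith [hsplit, h1]
  -- product bound
  have hprod : ∏ j ∈ range k, (x * q ^ j * (1 - Real.sqrt q * q ^ (k - 1 - j)))
      ≤ |qPochR x q k| := by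
    rw [qPochR, abs_prod]
    apply prod_le_prod
    · intro j hj
      rw [mem_range] at hj
      have hsle : Real.sqrt q * q ^ (k - 1 - j) ≤ 1 := by
        calc Real.sqrt q * q ^ (k - 1 - j) ≤ 1 * 1 :=
              mul_le_mul hs1.le (pow_le_one₀ hq0.le hq1.le) (by positivity) zero_le_one
          _ = 1 := by ring
      have : 0 ≤ x * q ^ j := by positivity
      nlinarith
    · exact hpt
  -- rewrite LHS product
  have hrw : ∏ j ∈ range k, (x * q ^ j * (1 - Real.sqrt q * q ^ (k - 1 - j)))
      = q ^ (k * (k - 1) / 2 : ℕ) * x ^ k * qPochR (Real.sqrt q) q k := by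
    rw [prod_mul_distrib, prod_mul_distrib, prod_const, Finset.prod_pow_eq_pow_sum,
      Finset.sum_range_id]
    have : ∏ j ∈ range k, (1 - Real.sqrt q * q ^ (k - 1 - j)) = qPochR (Real.sqrt q) q k := by
      rw [qPochR]
      exact Finset.prod_range_reflect (fun j => 1 - Real.sqrt q * q ^ j) k
    rw [this, card_range]; ring
  have hfirst : q ^ (k * (k - 1) / 2 : ℕ) * x ^ k * qPochR (Real.sqrt q) q k
      ≤ |qPochR x q k| := by rw [← hrw]; exact hprod
  refine ⟨hfirst, ?_⟩
  -- tprod ≤ finite product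
  have hM := aux_multipliable q hq0 hq1
  have hfac : ∀ j : ℕ, 0 < 1 - Real.sqrt q * q ^ j := by
    intro j
    have h1 : Real.sqrt q * q ^ j < 1 := by
      calc Real.sqrt q * q ^ j ≤ Real.sqrt q * 1 :=
            mul_le_mul_of_nonneg_left (pow_le_one₀ hq0.le hq1.le) hs0.le
        _ < 1 := by simpa using hs1
    linarith
  have htp : (∏' j : ℕ, (1 - Real.sqrt q * q ^ j)) ≤ qPochR (Real.sqrt q) q k := by
    apply le_of_tendsto hM.hasProd.tendsto_prod_nat
    filter_upwards [Filter.eventually_ge_atTop k] with n hn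
    rw [qPochR, ← Finset.prod_range_mul_prod_Ico _ hn]
    apply mul_le_of_le_one_right
    · exact prod_nonneg fun j _ => (hfac j).le
    · exact Finset.prod_le_one (fun j _ => (hfac j).le)
        (fun j _ => by have := hfac j; nlinarith [mul_pos hs0 (pow_pos hq0 j)])
  calc q ^ (k * (k - 1) / 2 : ℕ) * (∏' j : ℕ, (1 - Real.sqrt q * q ^ j)) * x ^ k
      ≤ q ^ (k * (k - 1) / 2 : ℕ) * qPochR (Real.sqrt q) q k * x ^ k := by
        apply mul_le_mul_of_nonneg_right _ (by positivity)
        exact mul_le_mul_of_nonneg_left htp (by positivity)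
    _ = q ^ (k * (k - 1) / 2 : ℕ) * x ^ k * qPochR (Real.sqrt q) q k := by ring
    _ ≤ |qPochR x q k| := hfirst
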